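/- Any finite chain complex (C_*, ∂) of finite-dimensional vector spaces over a field, equipped with a basis of each C_i and a linear order on the union of bases satisfying the decreasing-order condition (∂ of each basis element is a combination of strictly smaller basis elements), decomposes as a direct sum of complexes of the two types: (i) one-dimensional complexes with zero differential, and (ii) two-dimensional complexes spanned by basis-compatible vectors u, v with ∂(v) = u; moreover the number of summands of type (i) in degree k equals dim H_k(C_*, ∂). -/

import Mathlib

open Submodule Module

/-- Span of the first `k` standard basis vectors `a_1, ..., a_k` of `Fin N → E`. -/
noncomputable def Vspan (E : Type*) [Field E] (N k : ℕ) : Submodule E (Fin N → E) :=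
  Submodule.span E {v : Fin N → E | ∃ i : Fin N, (i : ℕ) < k ∧ v = Pi.single i 1}

/-- An M-differential: `d ∘ d = 0` and `d` maps `span{a_1,...,a_k}` into
`span{a_1,...,a_{k-1}}` for every `k`. -/
def IsMDiff {E : Type*} [Field E] {N : ℕ} (d : (Fin N → E) →ₗ[E] (Fin N → E)) : Prop :=
  d ∘ₗ d = 0 ∧ ∀ k : ℕ, Submodule.map d (Vspan E N k) ≤ Vspan E N (k - 1)

/-- An upper-triangular automorphism: an invertible linear map preserving every
subspace `span{a_1,...,a_k}`. -/
def IsUT {E : Type*} [Field E] {N : ℕ} (g : (Fin N → E) ≃ₗ[E] (Fin N → E)) : Prop :=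
  ∀ k : ℕ, Submodule.map g.toLinearMap (Vspan E N k) = Vspan E N k

/-- An elementary differential: each basis vector is sent to `0` or to a basis vector,
and no two distinct basis vectors have the same basis-vector image. -/
def IsElem {E : Type*} [Field E] {N : ℕ} (d : (Fin N → E) →ₗ[E] (Fin N → E)) : Prop :=
  (∀ i : Fin N, d (Pi.single i 1) = 0 ∨ ∃ j : Fin N, d (Pi.single i 1) = Pi.single j 1) ∧
  ∀ i i' j : Fin N, d (Pi.single i 1) = Pi.single j 1 →
    d (Pi.single i' 1) = Pi.single j 1 → i = i'

/-- The graded piece of degree `k`: the span of the basis vectors of degree `k`. -/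
noncomputable def degSub (E : Type*) [Field E] {N : ℕ} (deg : Fin N → ℤ) (k : ℤ) :
    Submodule E (Fin N → E) :=
  Submodule.span E {v : Fin N → E | ∃ i : Fin N, deg i = k ∧ v = Pi.single i 1}

section
variable {E : Type*} [Field E] {N : ℕ}

def csub (E : Type*) [Field E] {N : ℕ} (p : Fin N → Prop) : Submodule E (Fin N → E) where
  carrier := {v | ∀ j, ¬ p j → v j = 0}
  add_mem' := by intro a b ha hb j hj; simp [ha j hj, hb j hj]
  zero_mem' := by intro j hj; rfl
  smul_mem' := by intro c v hv j hj; simp [hv j hj]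

lemma mem_csub {p : Fin N → Prop} {v : Fin N → E} : v ∈ csub E p ↔ ∀ j, ¬ p j → v j = 0 := Iff.rfl

lemma single_eq_smul (i : Fin N) (c : E) : (Pi.single i c : Fin N → E) = c • (Pi.single i (1:E) : Fin N → E) := by
  ext j; by_cases h : j = i <;> simp [Pi.single_apply, h]

lemma span_eq_csub (p : Fin N → Prop) :
    Submodule.span E {v : Fin N → E | ∃ i, p i ∧ v = Pi.single i 1} = csub E p := by
  apply le_antisymm
  · rw [Submodule.span_le]
    rintro v ⟨i, hi, rfl⟩ j hj
    have : i ≠ j := fun h => hj (h ▸ hi)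
    simp [Pi.single_apply, this]
  · intro v hv
    have hv2 : v = ∑ i : Fin N, Pi.single i (v i) := (Finset.univ_sum_single v).symm
    rw [hv2]
    refine Submodule.sum_mem _ ?_
    intro i _
    by_cases hp : p i
    · rw [single_eq_smul]
      exact Submodule.smul_mem _ _ (Submodule.subset_span ⟨i, hp, rfl⟩)
    · rw [hv i hp]; simp

lemma Vspan_eq (k : ℕ) : Vspan E N k = csub E (fun i => (i:ℕ) < k) := span_eq_csub _

lemma degSub_eq (deg : Fin N → ℤ) (k : ℤ) : degSub E deg k = csub E (fun i => deg i = k) :=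
  span_eq_csub _

noncomputable def csubEquiv (p : Fin N → Prop) : csub E p ≃ₗ[E] ({i // p i} → E) := by
  classical
  refine LinearEquiv.ofLinear
    { toFun := fun v i => v.1 i.1
      map_add' := by intro a b; rfl
      map_smul' := by intro c a; rfl }
    { toFun := fun w => ⟨fun j => if h : p j then w ⟨j, h⟩ else 0, by
        intro j hj; simp [hj]⟩
      map_add' := by intro a b; ext j; by_cases h : p j <;> simp [h]
      map_smul' := by intro c a; ext j; by_cases h : p j <;> simp [h] }
    (by ext w i; simp [i.2])
    (by ext v j; by_cases h : p j
        · simp [h]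
        · simp only [LinearMap.comp_apply, LinearMap.coe_mk, AddHom.coe_mk, LinearMap.id_apply]
          simp [h, (v.2 j h).symm])

lemma finrank_csub (p : Fin N → Prop) :
    finrank E (csub E p) = Nat.card {i // p i} := by
  classical
  rw [(csubEquiv p).finrank_eq, Nat.card_eq_fintype_card]
  simp [finrank_fintype_fun_eq_card]
end

section
variable {E : Type*} [Field E] {N : ℕ}

noncomputable def mkLin (E : Type*) [Field E] {N : ℕ} (b : Fin N → Fin N → E) :
    (Fin N → E) →ₗ[E] (Fin N → E) where
  toFun v := ∑ i, v i • b i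
  map_add' x y := by simp [add_smul, Finset.sum_add_distrib]
  map_smul' c x := by simp [smul_smul, Finset.smul_sum]

lemma mkLin_apply (b : Fin N → Fin N → E) (v : Fin N → E) (j : Fin N) :
    mkLin E b v j = ∑ i, v i * b i j := by
  simp [mkLin, Finset.sum_apply]

lemma mkLin_single (b : Fin N → Fin N → E) (i : Fin N) :
    mkLin E b (Pi.single i 1) = b i := by
  ext j
  rw [mkLin_apply, Finset.sum_eq_single i]
  · simp
  · intro i' _ hi'; rw [Pi.single_eq_of_ne hi']; simp
  · simp

lemma mkLin_inj (b : Fin N → Fin N → E) (hdiag : ∀ i, b i i ≠ 0)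
    (htri : ∀ i j : Fin N, i < j → b i j = 0) : Function.Injective (mkLin E b) := by
  rw [injective_iff_map_eq_zero]
  intro v hv
  by_contra hv0
  classical
  have hne : (Finset.univ.filter (fun i => v i ≠ 0)).Nonempty := by
    rcases Function.ne_iff.1 hv0 with ⟨i, hi⟩
    have hi' : v i ≠ 0 := by simpa using hi
    exact ⟨i, by simp [hi']⟩
  set m := (Finset.univ.filter (fun i => v i ≠ 0)).max' hne with hm
  have hmmem := (Finset.univ.filter (fun i => v i ≠ 0)).max'_mem hne
  have hvm : v m ≠ 0 := (Finset.mem_filter.1 hmmem).2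
  have : mkLin E b v m = v m * b m m := by
    rw [mkLin_apply, Finset.sum_eq_single m]
    · intro i _ him
      by_cases hvi : v i = 0
      · simp [hvi]
      · have : i ≤ m := Finset.le_max' _ i (by simp [hvi])
        rw [htri i m (lt_of_le_of_ne this him)]; simp
    · simp
  rw [hv] at this
  exact (mul_ne_zero hvm (hdiag m)) this.symm

lemma map_eq_of_map_le {e : (Fin N → E) ≃ₗ[E] (Fin N → E)} {q : Submodule E (Fin N → E)}
    (h : q.map e.toLinearMap ≤ q) : q.map e.toLinearMap = q := by
  refine Submodule.eq_of_le_of_finrank_le h ?_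
  rw [LinearEquiv.finrank_map_eq]

lemma map_symm_eq {e : (Fin N → E) ≃ₗ[E] (Fin N → E)} {q : Submodule E (Fin N → E)}
    (h : q.map e.toLinearMap = q) : q.map e.symm.toLinearMap = q := by
  apply le_antisymm
  · rintro x ⟨y, hy, rfl⟩
    rw [← h] at hy
    rcases hy with ⟨z, hz, rfl⟩
    simpa using hz
  · intro x hx
    exact ⟨e x, h ▸ ⟨x, hx, rfl⟩, by simp⟩

lemma mkLin_mem_csub (b : Fin N → Fin N → E) (p : Fin N → Prop)
    (hb : ∀ i j, p i → b i j ≠ 0 → p j) {v : Fin N → E} (hv : v ∈ csub E p) :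
    mkLin E b v ∈ csub E p := by
  intro j hj
  rw [mkLin_apply, Finset.sum_eq_zero]
  intro i _
  by_cases hvi : v i = 0
  · simp [hvi]
  · have hpi : p i := by by_contra hpi; exact hvi (hv i hpi)
    by_cases hbij : b i j = 0
    · simp [hbij]
    · exact absurd (hb i j hpi hbij) hj
end

section
variable {E : Type*} [Field E] {N : ℕ}


structure MInv (deg : Fin N → ℤ) (d : (Fin N → E) →ₗ[E] (Fin N → E)) (n : ℕ)
    (b : Fin N → Fin N → E) (σ : Fin N → Option (Fin N)) : Prop where
  diag : ∀ i, b i i ≠ 0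
  tri : ∀ i j : Fin N, i < j → b i j = 0
  grad : ∀ i j : Fin N, b i j ≠ 0 → deg j = deg i
  rest : ∀ i : Fin N, n ≤ (i:ℕ) → b i = Pi.single i 1
  restσ : ∀ i : Fin N, n ≤ (i:ℕ) → σ i = none
  cyc : ∀ i : Fin N, (i:ℕ) < n → σ i = none → d (b i) = 0
  pair : ∀ i j : Fin N, σ i = some j → j < i ∧ d (b i) = b j
  inj : ∀ i i' j : Fin N, σ i = some j → σ i' = some j → i = i'

variable {deg : Fin N → ℤ} {d : (Fin N → E) →ₗ[E] (Fin N → E)}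

lemma MInv.source_lt {n b σ} (h : MInv deg d n b σ) {i j : Fin N} (hσ : σ i = some j) :
    (i:ℕ) < n := by
  by_contra hi
  rw [h.restσ i (by omega)] at hσ
  exact nomatch hσ

/-- graded maps send degree-`t` vectors to degree-`t-1` vectors -/
lemma d_grad (hgr : ∀ i j : Fin N, d (Pi.single i 1) j ≠ 0 → deg j = deg i - 1)
    (u : Fin N → E) (t : ℤ) (hu : ∀ k, u k ≠ 0 → deg k = t) :
    ∀ k, d u k ≠ 0 → deg k = t - 1 := by
  intro k hk
  have hu2 : u = ∑ i : Fin N, u i • (Pi.single i 1 : Fin N → E) := by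
    ext j
    rw [Finset.sum_apply, Finset.sum_eq_single j]
    · simp
    · intro i _ hij
      rw [Pi.smul_apply, Pi.single_eq_of_ne (Ne.symm hij)]
      simp
    · simp
  rw [hu2, map_sum] at hk
  simp only [map_smul, Finset.sum_apply, Pi.smul_apply, smul_eq_mul] at hk
  obtain ⟨i, _, hi⟩ := Finset.exists_ne_zero_of_sum_ne_zero hk
  have h1 : u i ≠ 0 := fun h0 => hi (by simp [h0])
  have h2 : d (Pi.single i 1) k ≠ 0 := fun h0 => hi (by simp [h0])
  rw [hgr i k h2, hu i h1]

lemma MInv.source_deg {n b σ} (h : MInv deg d n b σ)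
    (hgr : ∀ i j : Fin N, d (Pi.single i 1) j ≠ 0 → deg j = deg i - 1)
    {i j : Fin N} (hσ : σ i = some j) : deg i = deg j + 1 := by
  have hdb : d (b i) = b j := (h.pair i j hσ).2
  have := d_grad hgr (b i) (deg i) (fun k hk => h.grad i k hk) j (by rw [hdb]; exact h.diag j)
  omega

end

section
variable {E : Type*} [Field E] {N : ℕ} {deg : Fin N → ℤ} {d : (Fin N → E) →ₗ[E] (Fin N → E)}

lemma step (hdd : d ∘ₗ d = 0) (hfil : ∀ k : ℕ, Submodule.map d (Vspan E N k) ≤ Vspan E N (k-1))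
    (hgr : ∀ i j : Fin N, d (Pi.single i 1) j ≠ 0 → deg j = deg i - 1)
    (n : ℕ) (hn : n < N) {b σ} (h : MInv deg d n b σ) :
    ∃ b' σ', MInv deg d (n+1) b' σ' := by
  classical
  set n' : Fin N := ⟨n, hn⟩ with hn'
  have hsurj : Function.Surjective (mkLin E b) :=
    (LinearMap.injective_iff_surjective).1 (mkLin_inj b h.diag h.tri)
  set e : (Fin N → E) ≃ₗ[E] (Fin N → E) :=
    LinearEquiv.ofBijective (mkLin E b) ⟨mkLin_inj b h.diag h.tri, hsurj⟩ with he_def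
  have he : ∀ i, e (Pi.single i 1) = b i := fun i => mkLin_single b i
  have heapp : ∀ v, e v = mkLin E b v := fun v => rfl
  have hsymmb : ∀ j, e.symm (b j) = Pi.single j 1 := by
    intro j; rw [← he j, e.symm_apply_apply]
  have hble : ∀ i j : Fin N, b i j ≠ 0 → (j:ℕ) ≤ (i:ℕ) := by
    intro i j hij
    by_contra hji
    exact hij (h.tri i j (by exact Fin.lt_def.2 (by omega)))
  have hVmap : ∀ k, (Vspan E N k).map e.toLinearMap = Vspan E N k := by
    intro k
    apply map_eq_of_map_le
    rintro x ⟨v, hv, rfl⟩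
    rw [Vspan_eq] at hv ⊢
    exact mkLin_mem_csub b _ (fun i j hi hbij => by have := hble i j hbij; omega) hv
  have hDmap : ∀ k, (degSub E deg k).map e.toLinearMap = degSub E deg k := by
    intro k
    apply map_eq_of_map_le
    rintro x ⟨v, hv, rfl⟩
    rw [degSub_eq] at hv ⊢
    exact mkLin_mem_csub b _ (fun i j hi hbij => by rw [h.grad i j hbij, hi]) hv
  set w := d (Pi.single n' 1) with hw
  have hwV : w ∈ Vspan E N n := by
    have h1 : (Pi.single n' 1 : Fin N → E) ∈ Vspan E N (n+1) :=
      Submodule.subset_span ⟨n', by simp [hn'], rfl⟩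
    have := hfil (n+1) ⟨_, h1, rfl⟩
    simpa using this
  have hwD : w ∈ degSub E deg (deg n' - 1) := by
    rw [degSub_eq]
    intro j hj
    by_contra h0
    exact hj (hgr n' j h0)
  set c := e.symm w with hc
  have hcw : ∑ i, c i • b i = w := by
    have h1 : e c = w := e.apply_symm_apply w
    rw [← h1, heapp]
    rfl
  have hcV : ∀ i : Fin N, n ≤ (i:ℕ) → c i = 0 := by
    have h1 : c ∈ Vspan E N n := by
      rw [← map_symm_eq (hVmap n)]
      exact ⟨w, hwV, rfl⟩
    rw [Vspan_eq] at h1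
    exact fun i hi => h1 i (by omega)
  have hcD : ∀ i, c i ≠ 0 → deg i = deg n' - 1 := by
    have h1 : c ∈ degSub E deg (deg n' - 1) := by
      rw [← map_symm_eq (hDmap (deg n' - 1))]
      exact ⟨w, hwD, rfl⟩
    rw [degSub_eq] at h1
    exact fun i hi => by by_contra h0; exact hi (h1 i h0)
  have hdw : d w = 0 := by
    have : d (d (Pi.single n' 1)) = (d ∘ₗ d) (Pi.single n' 1) := rfl
    rw [hw, this, hdd]
    rfl
  have hsource0 : ∀ i j : Fin N, σ i = some j → c i = 0 := by
    intro i₀ j₀ hσ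
    have h1 : ∑ i, c i • d (b i) = 0 := by
      rw [show (∑ i, c i • d (b i)) = d (∑ i, c i • b i) by
        rw [map_sum]; exact Finset.sum_congr rfl fun i _ => (map_smul d _ _).symm]
      rw [hcw, hdw]
    have h2 : (∑ i, c i • (e.symm (d (b i)))) = 0 := by
      have h3 := congrArg e.symm h1
      simpa [map_sum, map_smul] using h3
    have h3 : (∑ i, c i • (e.symm (d (b i)))) j₀ = 0 := by rw [h2]; rfl
    rw [Finset.sum_apply] at h3
    rw [Finset.sum_eq_single i₀] at h3
    · rw [(h.pair i₀ j₀ hσ).2, hsymmb j₀] at h3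
      simpa using h3
    · intro i _ hii
      cases hσi : σ i with
      | none =>
        by_cases hi : (i:ℕ) < n
        · rw [h.cyc i hi hσi]
          simp
        · rw [hcV i (by omega)]
          simp
      | some j =>
        rw [(h.pair i j hσi).2, hsymmb j]
        have hjj : j ≠ j₀ := fun hjj => hii (h.inj i i₀ j₀ (hjj ▸ hσi) hσ)
        simp [Pi.single_eq_of_ne (Ne.symm hjj)]
    · simp
  set T : Finset (Fin N) := Finset.univ.filter (fun j => ∃ i, σ i = some j) with hT
  have hτex : ∀ j ∈ T, ∃ i, σ i = some j := fun j hj => (Finset.mem_filter.1 hj).2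
  set τ : Fin N → Fin N := fun j => if hj : ∃ i, σ i = some j then hj.choose else j with hτdef
  have hτ : ∀ j : Fin N, (∃ i, σ i = some j) → σ (τ j) = some j := by
    intro j hj
    rw [hτdef]
    simp only [dif_pos hj]
    exact hj.choose_spec
  set v₀ : Fin N → E := Pi.single n' 1 - ∑ j ∈ T, c j • b (τ j) with hv₀
  set r := d v₀ with hrdef
  set U : Finset (Fin N) := Finset.univ.filter (fun j => ¬∃ i, σ i = some j) with hU
  have hdv₀ : r = ∑ j ∈ U, c j • b j := by
    rw [hrdef, hv₀, map_sub, map_sum]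
    have h1 : ∀ j ∈ T, d (c j • b (τ j)) = c j • b j := by
      intro j hj
      rw [map_smul, (h.pair (τ j) j (hτ j (hτex j hj))).2]
    rw [Finset.sum_congr rfl h1]
    have h2 : w = (∑ j ∈ T, c j • b j) + ∑ j ∈ U, c j • b j := by
      rw [← hcw, hT, hU, Finset.sum_filter_add_sum_filter_not]
    rw [← hw, h2]
    abel
  have hUc : ∀ j ∈ U, c j ≠ 0 → σ j = none ∧ (j:ℕ) < n ∧ d (b j) = 0 ∧ deg j = deg n' - 1 := by
    intro j hj hcj
    have h1 : σ j = none := by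
      cases hσj : σ j with
      | none => rfl
      | some j' => exact absurd (hsource0 j j' hσj) hcj
    have h2 : (j:ℕ) < n := by
      by_contra h0
      exact hcj (hcV j (by omega))
    exact ⟨h1, h2, h.cyc j h2 h1, hcD j hcj⟩
  have hdr : d r = 0 := by
    rw [hdv₀, map_sum]
    apply Finset.sum_eq_zero
    intro j hj
    by_cases hcj : c j = 0
    · simp [hcj]
    · rw [map_smul, (hUc j hj hcj).2.2.1, smul_zero]
  have hn'v : (n':ℕ) = n := rfl
  have hτlt : ∀ j ∈ T, (τ j : ℕ) < n := fun j hj => h.source_lt (hτ j (hτex j hj))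
  have hv₀n : v₀ n' = 1 := by
    rw [hv₀]
    simp only [Pi.sub_apply, Finset.sum_apply, Pi.smul_apply, smul_eq_mul]
    rw [Pi.single_eq_same, Finset.sum_eq_zero, sub_zero]
    intro j hj
    rw [h.tri (τ j) n' (Fin.lt_def.2 (by rw [hn'v]; exact hτlt j hj)), mul_zero]
  have hv₀tri : ∀ k : Fin N, n' < k → v₀ k = 0 := by
    intro k hk
    rw [hv₀]
    simp only [Pi.sub_apply, Finset.sum_apply, Pi.smul_apply, smul_eq_mul]
    rw [Pi.single_eq_of_ne (Ne.symm (Fin.ne_of_lt hk)), Finset.sum_eq_zero, sub_zero]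
    intro j hj
    rw [h.tri (τ j) k (lt_trans (Fin.lt_def.2 (by rw [hn'v]; exact hτlt j hj)) hk), mul_zero]
  have hv₀grad : ∀ k : Fin N, v₀ k ≠ 0 → deg k = deg n' := by
    intro k hk
    by_cases hkn : k = n'
    · rw [hkn]
    · rw [hv₀] at hk
      simp only [Pi.sub_apply, Finset.sum_apply, Pi.smul_apply, smul_eq_mul] at hk
      rw [Pi.single_eq_of_ne hkn, zero_sub, neg_ne_zero] at hk
      obtain ⟨j, hjT, hj⟩ := Finset.exists_ne_zero_of_sum_ne_zero hk
      have hcj : c j ≠ 0 := fun h0 => hj (by simp [h0])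
      have hbj : b (τ j) k ≠ 0 := fun h0 => hj (by simp [h0])
      rw [h.grad _ _ hbj]
      have hd1 := h.source_deg hgr (hτ j (hτex j hjT))
      have hd2 := hcD j hcj
      omega
  by_cases hA : ∀ j ∈ U, c j = 0
  · -- Case A: d v₀ = 0, index n becomes an unpaired cycle
    have hr0 : r = 0 := by
      rw [hdv₀]
      exact Finset.sum_eq_zero fun j hj => by rw [hA j hj, zero_smul]
    refine ⟨Function.update b n' v₀, σ, ?_, ?_, ?_, ?_, ?_, ?_, ?_, ?_⟩
    · intro i
      by_cases hi : i = n'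
      · rw [hi, Function.update_self, hv₀n]
        exact one_ne_zero
      · rw [Function.update_of_ne hi]
        exact h.diag i
    · intro i j hij
      by_cases hi : i = n'
      · rw [hi, Function.update_self]
        exact hv₀tri j (hi ▸ hij)
      · rw [Function.update_of_ne hi]
        exact h.tri i j hij
    · intro i j hij
      by_cases hi : i = n'
      · rw [hi]
        exact hv₀grad j (by rwa [hi, Function.update_self] at hij)
      · rw [Function.update_of_ne hi] at hij
        exact h.grad i j hij
    · intro i hi
      rw [Function.update_of_ne (Fin.ne_of_val_ne (by omega))]
      exact h.rest i (by omega)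
    · intro i hi
      exact h.restσ i (by omega)
    · intro i hi hσi
      by_cases hilt : (i:ℕ) < n
      · rw [Function.update_of_ne (Fin.ne_of_val_ne (by omega))]
        exact h.cyc i hilt hσi
      · have hieq : i = n' := Fin.ext (by omega)
        rw [hieq, Function.update_self, ← hrdef, hr0]
    · intro i j hσij
      have hilt := h.source_lt hσij
      have hjlt : (j:ℕ) < (i:ℕ) := Fin.lt_def.1 (h.pair i j hσij).1
      rw [Function.update_of_ne (Fin.ne_of_val_ne (show (i:ℕ) ≠ n by omega)),
        Function.update_of_ne (Fin.ne_of_val_ne (show (j:ℕ) ≠ n by omega))]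
      exact h.pair i j hσij
    · exact h.inj
  · -- Case B: pair n with the maximal unpaired index M
    push_neg at hA
    obtain ⟨j₁, hj₁U, hj₁c⟩ := hA
    set s : Finset (Fin N) := U.filter (fun j => c j ≠ 0) with hs
    have hsne : s.Nonempty := ⟨j₁, Finset.mem_filter.2 ⟨hj₁U, hj₁c⟩⟩
    set M := s.max' hsne with hM
    have hMs := s.max'_mem hsne
    have hMU : M ∈ U := (Finset.mem_filter.1 hMs).1
    have hMc : c M ≠ 0 := (Finset.mem_filter.1 hMs).2
    obtain ⟨hMσ, hMlt, hMd, hMdeg⟩ := hUc M hMU hMc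
    have hMnt : ¬∃ i, σ i = some M := by
      have := (Finset.mem_filter.1 hMU).2
      simpa using this
    have hrM : r M ≠ 0 := by
      have hcoord : r M = c M * b M M := by
        rw [hdv₀, Finset.sum_apply]
        rw [Finset.sum_eq_single_of_mem M hMU]
        · rfl
        · intro j hjU hjM
          by_cases hcj : c j = 0
          · rw [Pi.smul_apply, hcj, zero_smul]
          · have hjs : j ∈ s := Finset.mem_filter.2 ⟨hjU, hcj⟩
            have hle : (j:ℕ) ≤ (M:ℕ) := Fin.le_def.1 (Finset.le_max' s j hjs)
            have hne : (j:ℕ) ≠ (M:ℕ) := Fin.val_ne_of_ne hjM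
            rw [Pi.smul_apply, h.tri j M (Fin.lt_def.2 (by omega)), smul_zero]
      rw [hcoord]
      exact mul_ne_zero hMc (h.diag M)
    have hrtri : ∀ k : Fin N, M < k → r k = 0 := by
      intro k hk
      rw [hdv₀, Finset.sum_apply]
      apply Finset.sum_eq_zero
      intro j hjU
      by_cases hcj : c j = 0
      · rw [Pi.smul_apply, hcj, zero_smul]
      · have hjs : j ∈ s := Finset.mem_filter.2 ⟨hjU, hcj⟩
        have hle : j ≤ M := Finset.le_max' s j hjs
        rw [Pi.smul_apply, h.tri j k (lt_of_le_of_lt hle hk), smul_zero]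
    have hrgrad : ∀ k : Fin N, r k ≠ 0 → deg k = deg M := by
      intro k hk
      rw [hdv₀, Finset.sum_apply] at hk
      obtain ⟨j, hjU, hj⟩ := Finset.exists_ne_zero_of_sum_ne_zero hk
      have hcj : c j ≠ 0 := fun h0 => hj (by simp [h0])
      have hbj : b j k ≠ 0 := fun h0 => hj (by simp [h0])
      rw [h.grad j k hbj, hcD j hcj, hMdeg]
    have hMn : (M:ℕ) < n := hMlt
    have hMn' : M ≠ n' := Fin.ne_of_val_ne (by omega)
    set b' := Function.update (Function.update b M r) n' v₀ with hb'
    set σ' := Function.update σ n' (some M) with hσ'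
    have hb'n : b' n' = v₀ := Function.update_self _ _ _
    have hb'M : b' M = r := by
      rw [hb', Function.update_of_ne hMn', Function.update_self]
    have hb'o : ∀ i, i ≠ n' → i ≠ M → b' i = b i := by
      intro i h1 h2
      rw [hb', Function.update_of_ne h1, Function.update_of_ne h2]
    have hσ'n : σ' n' = some M := Function.update_self _ _ _
    have hσ'o : ∀ i, i ≠ n' → σ' i = σ i := fun i h1 => Function.update_of_ne h1 _ _
    refine ⟨b', σ', ?_, ?_, ?_, ?_, ?_, ?_, ?_, ?_⟩
    · intro i
      by_cases h1 : i = n'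
      · rw [h1, hb'n, hv₀n]; exact one_ne_zero
      · by_cases h2 : i = M
        · rw [h2, hb'M]; exact hrM
        · rw [hb'o i h1 h2]; exact h.diag i
    · intro i j hij
      by_cases h1 : i = n'
      · rw [h1, hb'n]; exact hv₀tri j (h1 ▸ hij)
      · by_cases h2 : i = M
        · rw [h2, hb'M]; exact hrtri j (h2 ▸ hij)
        · rw [hb'o i h1 h2]; exact h.tri i j hij
    · intro i j hij
      by_cases h1 : i = n'
      · rw [h1]; exact hv₀grad j (by rwa [h1, hb'n] at hij)
      · by_cases h2 : i = M
        · rw [h2]; exact hrgrad j (by rwa [h2, hb'M] at hij)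
        · rw [hb'o i h1 h2] at hij; exact h.grad i j hij
    · intro i hi
      rw [hb'o i (Fin.ne_of_val_ne (by omega)) (Fin.ne_of_val_ne (by omega))]
      exact h.rest i (by omega)
    · intro i hi
      rw [hσ'o i (Fin.ne_of_val_ne (by omega))]
      exact h.restσ i (by omega)
    · intro i hi hσi
      have h1 : i ≠ n' := by
        intro hh
        rw [hh, hσ'n] at hσi
        exact nomatch hσi
      rw [hσ'o i h1] at hσi
      by_cases h2 : i = M
      · rw [h2, hb'M]; exact hdr
      · rw [hb'o i h1 h2]
        have : (i:ℕ) ≠ n := fun hh => h1 (Fin.ext (by omega))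
        exact h.cyc i (by omega) hσi
    · intro i j hσij
      by_cases h1 : i = n'
      · rw [h1, hσ'n] at hσij
        obtain rfl : M = j := Option.some.inj hσij
        refine ⟨?_, ?_⟩
        · rw [h1]; exact Fin.lt_def.2 (by omega)
        · rw [h1, hb'n, hb'M, ← hrdef]
      · rw [hσ'o i h1] at hσij
        have hpair := h.pair i j hσij
        have hilt := h.source_lt hσij
        have hjlt : (j:ℕ) < (i:ℕ) := Fin.lt_def.1 hpair.1
        have hiM : i ≠ M := by
          intro hh
          rw [hh, hMσ] at hσij
          exact nomatch hσij
        have hjM : j ≠ M := fun hh => hMnt ⟨i, hh ▸ hσij⟩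
        have hjn' : j ≠ n' := Fin.ne_of_val_ne (by omega)
        rw [hb'o i h1 hiM, hb'o j hjn' hjM]
        exact hpair
    · intro i i' j h1 h2
      by_cases hi : i = n' <;> by_cases hi' : i' = n'
      · rw [hi, hi']
      · rw [hi, hσ'n] at h1
        obtain rfl : M = j := Option.some.inj h1
        rw [hσ'o i' hi'] at h2
        exact absurd ⟨i', h2⟩ hMnt
      · rw [hi', hσ'n] at h2
        obtain rfl : M = j := Option.some.inj h2
        rw [hσ'o i hi] at h1
        exact absurd ⟨i, h1⟩ hMnt
      · rw [hσ'o i hi] at h1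
        rw [hσ'o i' hi'] at h2
        exact h.inj i i' j h1 h2
end

section
variable {E : Type*} [Field E] {N : ℕ} {deg : Fin N → ℤ} {d : (Fin N → E) →ₗ[E] (Fin N → E)}

lemma MInv.target_none {n b σ} (hdd : d ∘ₗ d = 0) (h : MInv deg d n b σ) {i j : Fin N}
    (hσ : σ i = some j) : σ j = none := by
  cases hσj : σ j with
  | none => rfl
  | some j' =>
    have h1 : d (b j) = b j' := (h.pair j j' hσj).2
    have h2 : d (b i) = b j := (h.pair i j hσ).2
    have h3 : d (b j) = 0 := by
      rw [← h2, show d (d (b i)) = (d ∘ₗ d) (b i) from rfl, hdd]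
      rfl
    rw [h1] at h3
    exact absurd (congrFun h3 j') (h.diag j')

lemma exists_MInv (hdd : d ∘ₗ d = 0)
    (hfil : ∀ k : ℕ, Submodule.map d (Vspan E N k) ≤ Vspan E N (k-1))
    (hgr : ∀ i j : Fin N, d (Pi.single i 1) j ≠ 0 → deg j = deg i - 1) :
    ∃ b σ, MInv deg d N b σ := by
  have H : ∀ n, n ≤ N → ∃ b σ, MInv deg d n b σ := by
    intro n
    induction n with
    | zero =>
      intro _
      refine ⟨fun i => Pi.single i 1, fun _ => none, ?_, ?_, ?_, ?_, ?_, ?_, ?_, ?_⟩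
      · intro i; rw [Pi.single_eq_same]; exact one_ne_zero
      · intro i j hij; exact Pi.single_eq_of_ne (Ne.symm (Fin.ne_of_lt hij)) 1
      · intro i j hij
        by_cases hji : j = i
        · rw [hji]
        · exact absurd (Pi.single_eq_of_ne hji 1) hij
      · intro i _; rfl
      · intro i _; rfl
      · intro i hi _; omega
      · intro i j hσ; exact nomatch hσ
      · intro i i' j h1 _; exact nomatch h1
    | succ n ih =>
      intro hn
      obtain ⟨b, σ, h⟩ := ih (by omega)
      exact step hdd hfil hgr n (by omega) h
  exact H N le_rfl
end

/-- a bounded chain complex with ordered bases (a graded M-complex, the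
grading recorded by `deg` and the differential lowering `deg` by one) can be brought,
by an upper-triangular (filtration-preserving) change of basis, to elementary form —
i.e. it splits into one-dimensional summands with zero differential and two-dimensional
summands `d v = u` — and the number of one-dimensional summands in degree `k` equals
`dim H_k = dim (ker d ⊓ C_k) - dim (range d ⊓ C_k)`. -/
theorem stmt19 {E : Type*} [Field E] {N : ℕ} (deg : Fin N → ℤ)
    (d : (Fin N → E) →ₗ[E] (Fin N → E)) (hd : IsMDiff d)
    (hgr : ∀ i j : Fin N, d (Pi.single i 1) j ≠ 0 → deg j = deg i - 1) :
    ∃ g : (Fin N → E) ≃ₗ[E] (Fin N → E), ∃ d' : (Fin N → E) →ₗ[E] (Fin N → E),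
      d' = g.toLinearMap ∘ₗ d ∘ₗ g.symm.toLinearMap ∧ IsUT g ∧ IsElem d' ∧
      ∀ k : ℤ,
        Nat.card {i : Fin N // deg i = k ∧ d' (Pi.single i 1) = 0 ∧
            ∀ j : Fin N, d' (Pi.single j 1) ≠ Pi.single i 1} =
          Module.finrank E ↥(LinearMap.ker d ⊓ degSub E deg k) -
            Module.finrank E ↥(LinearMap.range d ⊓ degSub E deg k) := by
  classical
  obtain ⟨hdd, hfil⟩ := hd
  classical
  obtain ⟨b, σ, h⟩ := exists_MInv hdd hfil hgr
  have hsurj : Function.Surjective (mkLin E b) :=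
    (LinearMap.injective_iff_surjective).1 (mkLin_inj b h.diag h.tri)
  set e : (Fin N → E) ≃ₗ[E] (Fin N → E) :=
    LinearEquiv.ofBijective (mkLin E b) ⟨mkLin_inj b h.diag h.tri, hsurj⟩ with he_def
  have he : ∀ i, e (Pi.single i 1) = b i := fun i => mkLin_single b i
  have hsymmb : ∀ j, e.symm (b j) = Pi.single j 1 := by
    intro j; rw [← he j, e.symm_apply_apply]
  have hble : ∀ i j : Fin N, b i j ≠ 0 → (j:ℕ) ≤ (i:ℕ) := by
    intro i j hij
    by_contra hji
    exact hij (h.tri i j (Fin.lt_def.2 (by omega)))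
  have hVmap : ∀ k, (Vspan E N k).map e.toLinearMap = Vspan E N k := by
    intro k
    apply map_eq_of_map_le
    rintro x ⟨v, hv, rfl⟩
    rw [Vspan_eq] at hv ⊢
    exact mkLin_mem_csub b _ (fun i j hi hbij => by have := hble i j hbij; omega) hv
  have hDmap : ∀ k, (degSub E deg k).map e.toLinearMap = degSub E deg k := by
    intro k
    apply map_eq_of_map_le
    rintro x ⟨v, hv, rfl⟩
    rw [degSub_eq] at hv ⊢
    exact mkLin_mem_csub b _ (fun i j hi hbij => by rw [h.grad i j hbij, hi]) hv
  set d' : (Fin N → E) →ₗ[E] (Fin N → E) :=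
    e.symm.toLinearMap ∘ₗ d ∘ₗ e.symm.symm.toLinearMap with hd'def
  have happ : ∀ x, d' x = e.symm (d (e x)) := by
    intro x
    rw [hd'def]
    simp [LinearMap.comp_apply]
  have hval0 : ∀ i : Fin N, σ i = none → d' (Pi.single i 1) = 0 := by
    intro i hσi
    rw [happ, he, h.cyc i i.isLt hσi]
    simp
  have hval1 : ∀ i j : Fin N, σ i = some j → d' (Pi.single i 1) = Pi.single j 1 := by
    intro i j hσi
    rw [happ, he, (h.pair i j hσi).2, hsymmb]
  have hcode : ∀ i j : Fin N, d' (Pi.single i 1) = Pi.single j 1 → σ i = some j := by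
    intro i j hij
    cases hσi : σ i with
    | none =>
      rw [hval0 i hσi] at hij
      have := congrFun hij j
      rw [Pi.single_eq_same] at this
      exact absurd this.symm one_ne_zero
    | some j' =>
      rw [hval1 i j' hσi] at hij
      by_cases hjj : j' = j
      · rw [hjj]
      · have := congrFun hij j'
        rw [Pi.single_eq_same, Pi.single_eq_of_ne hjj] at this
        exact absurd this one_ne_zero
  refine ⟨e.symm, d', rfl, fun k => map_symm_eq (hVmap k), ⟨?_, ?_⟩, ?_⟩
  · intro i
    cases hσi : σ i with
    | none => exact Or.inl (hval0 i hσi)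
    | some j => exact Or.inr ⟨j, hval1 i j hσi⟩
  · intro i i' j h1 h2
    exact h.inj i i' j (hcode i j h1) (hcode i' j h2)
  · intro k
    have eq_sum_single : ∀ v : Fin N → E, v = ∑ i : Fin N, v i • (Pi.single i 1 : Fin N → E) := by
      intro v
      ext j
      rw [Finset.sum_apply, Finset.sum_eq_single j]
      · simp
      · intro i _ hij
        rw [Pi.smul_apply, Pi.single_eq_of_ne (Ne.symm hij)]
        simp
      · simp
    have hexp : ∀ (v : Fin N → E) (j : Fin N), d' v j = ∑ i, v i * (d' (Pi.single i 1)) j := by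
      intro v j
      conv_lhs => rw [eq_sum_single v]
      rw [map_sum, Finset.sum_apply]
      simp [map_smul]
    have hkerd' : LinearMap.ker d' ⊓ degSub E deg k
        = csub E (fun i => deg i = k ∧ σ i = none) := by
      apply le_antisymm
      · rintro v hv
        obtain ⟨hv1, hv2⟩ := Submodule.mem_inf.1 hv
        rw [degSub_eq] at hv2
        intro j hPj
        by_cases hdeg : deg j = k
        · have hσj : σ j ≠ none := fun hh => hPj ⟨hdeg, hh⟩
          obtain ⟨j', hσj'⟩ := Option.ne_none_iff_exists'.1 hσj
          have h1 : d' v = 0 := LinearMap.mem_ker.1 hv1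
          have h2 : d' v j' = ∑ i, v i * (d' (Pi.single i 1)) j' := hexp v j'
          rw [h1, Finset.sum_eq_single j] at h2
          · rw [hval1 j j' hσj', Pi.single_eq_same, mul_one] at h2
            simpa using h2.symm
          · intro i _ hij
            cases hσi : σ i with
            | none => rw [hval0 i hσi]; simp
            | some j'' =>
              rw [hval1 i j'' hσi,
                Pi.single_eq_of_ne (fun hh => hij (h.inj i j j' (by rw [hσi, hh]) hσj')),
                mul_zero]
          · simp
        · exact hv2 j hdeg
      · intro v hv
        rw [Submodule.mem_inf]
        constructor
        · rw [LinearMap.mem_ker]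
          ext j'
          rw [hexp v j']
          simp only [Pi.zero_apply]
          apply Finset.sum_eq_zero
          intro i _
          by_cases hvi : v i = 0
          · rw [hvi, zero_mul]
          · have hPi : deg i = k ∧ σ i = none := by
              by_contra hP
              exact hvi (hv i hP)
            rw [hval0 i hPi.2]
            simp
        · rw [degSub_eq]
          intro j hj
          exact hv j (fun hPj => hj hPj.1)
    have hranged' : LinearMap.range d' ⊓ degSub E deg k
        = csub E (fun i => deg i = k ∧ ∃ j, σ j = some i) := by
      apply le_antisymm
      · rintro v hv
        obtain ⟨hv1, hv2⟩ := Submodule.mem_inf.1 hv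
        rw [degSub_eq] at hv2
        intro j hPj
        by_cases hdeg : deg j = k
        · have hnt : ¬∃ i, σ i = some j := fun hh => hPj ⟨hdeg, hh⟩
          obtain ⟨u, rfl⟩ := LinearMap.mem_range.1 hv1
          rw [hexp u j]
          apply Finset.sum_eq_zero
          intro i _
          cases hσi : σ i with
          | none => rw [hval0 i hσi]; simp
          | some j'' =>
            rw [hval1 i j'' hσi,
              Pi.single_eq_of_ne (fun hh => hnt ⟨i, by rw [hσi, hh]⟩), mul_zero]
        · exact hv2 j hdeg
      · intro v hv
        rw [Submodule.mem_inf]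
        refine ⟨?_, ?_⟩
        · rw [LinearMap.mem_range]
          refine ⟨∑ i : Fin N, if hP : ∃ j', σ j' = some i then
            v i • (Pi.single hP.choose 1 : Fin N → E) else 0, ?_⟩
          rw [map_sum]
          have hterm : ∀ i ∈ Finset.univ, d' (if hP : ∃ j', σ j' = some i then
              v i • (Pi.single hP.choose 1 : Fin N → E) else 0)
              = v i • (Pi.single i 1 : Fin N → E) := by
            intro i _
            by_cases hP : ∃ j', σ j' = some i
            · rw [dif_pos hP, map_smul, hval1 hP.choose i hP.choose_spec]
            · rw [dif_neg hP, map_zero]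
              have hvi : v i = 0 := hv i (fun hPi => hP hPi.2)
              rw [hvi, zero_smul]
          rw [Finset.sum_congr rfl hterm]
          exact (eq_sum_single v).symm
        · rw [degSub_eq]
          intro j hj
          exact hv j (fun hPj => hj hPj.1)
    have hkermap : LinearMap.ker d = Submodule.map e.toLinearMap (LinearMap.ker d') := by
      ext x
      simp only [Submodule.mem_map, LinearMap.mem_ker]
      constructor
      · intro hx
        refine ⟨e.symm x, ?_, by simp⟩
        rw [happ, e.apply_symm_apply, hx, map_zero]
      · rintro ⟨y, hy, rfl⟩
        rw [happ] at hy
        have h2 := congrArg e hy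
        simpa using h2
    have hrangemap : LinearMap.range d
        = Submodule.map e.toLinearMap (LinearMap.range d') := by
      ext x
      simp only [Submodule.mem_map, LinearMap.mem_range]
      constructor
      · rintro ⟨y, rfl⟩
        refine ⟨d' (e.symm y), ⟨e.symm y, rfl⟩, ?_⟩
        rw [happ]
        simp
      · rintro ⟨y, ⟨u, rfl⟩, rfl⟩
        refine ⟨e u, ?_⟩
        rw [happ]
        simp
    have hk1 : finrank E ↥(LinearMap.ker d ⊓ degSub E deg k)
        = Nat.card {i : Fin N // deg i = k ∧ σ i = none} := by
      rw [hkermap, ← hDmap k, ← Submodule.map_inf e.toLinearMap e.injective, hkerd',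
        LinearEquiv.finrank_map_eq, finrank_csub]
    have hk2 : finrank E ↥(LinearMap.range d ⊓ degSub E deg k)
        = Nat.card {i : Fin N // deg i = k ∧ ∃ j, σ j = some i} := by
      rw [hrangemap, ← hDmap k, ← Submodule.map_inf e.toLinearMap e.injective, hranged',
        LinearEquiv.finrank_map_eq, finrank_csub]
    have hLHS : Nat.card {i : Fin N // deg i = k ∧ d' (Pi.single i 1) = 0 ∧
          ∀ j : Fin N, d' (Pi.single j 1) ≠ Pi.single i 1}
        = Nat.card {i : Fin N // deg i = k ∧ σ i = none ∧ ∀ j, σ j ≠ some i} := by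
      apply Nat.card_congr
      apply Equiv.subtypeEquivRight
      intro i
      constructor
      · rintro ⟨h1, h2, h3⟩
        refine ⟨h1, ?_, fun j hj => h3 j (hval1 j i hj)⟩
        cases hσi : σ i with
        | none => rfl
        | some j =>
          rw [hval1 i j hσi] at h2
          have := congrFun h2 j
          rw [Pi.single_eq_same] at this
          exact absurd this one_ne_zero
      · rintro ⟨h1, h2, h3⟩
        exact ⟨h1, hval0 i h2, fun j hj => h3 j (hcode j i hj)⟩
    rw [hLHS, hk1, hk2]
    rw [Nat.card_eq_fintype_card, Nat.card_eq_fintype_card, Nat.card_eq_fintype_card]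
    rw [Fintype.card_subtype, Fintype.card_subtype, Fintype.card_subtype]
    have hBA : Finset.univ.filter (fun i => deg i = k ∧ ∃ j, σ j = some i)
        ⊆ Finset.univ.filter (fun i => deg i = k ∧ σ i = none) := by
      intro i hi
      obtain ⟨h1, j, hj⟩ := (Finset.mem_filter.1 hi).2
      exact Finset.mem_filter.2 ⟨Finset.mem_univ i, h1, h.target_none hdd hj⟩
    have hfilter : Finset.univ.filter (fun i => deg i = k ∧ σ i = none ∧ ∀ j, σ j ≠ some i)
        = Finset.univ.filter (fun i => deg i = k ∧ σ i = none)
          \ Finset.univ.filter (fun i => deg i = k ∧ ∃ j, σ j = some i) := by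
      ext i
      simp only [Finset.mem_filter, Finset.mem_sdiff, Finset.mem_univ, true_and, not_and,
        not_exists]
      tauto
    rw [hfilter, Finset.card_sdiff_of_subset hBA]
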